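/- Let G be a finite abelian group, π a subgroup of G, and ε > 0. Suppose ζ₁ and ζ₂ are independent G-valued random variables and ζ₂ is supported on π and ε-equidistributed on π. Then for every g ∈ G, P(ζ₁ + ζ₂ = g) ≤ (1+ε) · P(ζ₁ ∈ g + π) / |π|. -/

import Mathlib

/-!
If `ζ₁, ζ₂` are independent `G`-valued random variables, with `ζ₂` supported
on a subgroup `π` and `ε`-equidistributed on `π`, then
`P(ζ₁ + ζ₂ = g) ≤ (1+ε)·P(ζ₁ ∈ g + π)/|π|`.
-/

noncomputable section

-- The Fourier coefficient, at a character `χ` of the subgroup `π`, of a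
-- distribution `f` on `G` supported on `π` (viewed as a distribution on `π`).
open Classical in
noncomputable def subgroupFourierCoeff {G : Type} [AddCommGroup G] [Fintype G]
    (π : AddSubgroup G) (f : G → ℝ) (χ : AddChar π ℂ) : ℂ :=
  letI : Fintype π := Fintype.ofFinite _
  ∑ a : π, (f (a : G) : ℂ) * χ a

/-- `f` is `ε`-equidistributed on the subgroup `π`. -/
def EquidistOn {G : Type} [AddCommGroup G] [Fintype G]
    (π : AddSubgroup G) (f : G → ℝ) (ε : ℝ) : Prop :=
  ∀ χ : AddChar π ℂ, χ ≠ 1 →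
    ‖subgroupFourierCoeff π f χ‖ ≤ ε / (Nat.card π : ℝ)

/-- The law of the sum of two independent random variables with laws `f`, `g`. -/
noncomputable def convLaw {G : Type} [AddCommGroup G] [Fintype G]
    (f g : G → ℝ) : G → ℝ :=
  fun x => ∑ a : G, f a * g (x - a)

-- `P(ζ₁ ∈ g + π)`: the mass the law `f` gives to the coset `g + π`.
open Classical in
noncomputable def cosetMass {G : Type} [AddCommGroup G] [Fintype G]
    (f : G → ℝ) (g : G) (π : AddSubgroup G) : ℝ :=
  ∑ x ∈ Finset.univ.filter (fun x => -g + x ∈ π), f x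

/-- **Pointwise bound for a sum with an ε-equidistributed summand.** -/
theorem conv_pointwise_bound
    {G : Type} [AddCommGroup G] [Fintype G] (π : AddSubgroup G)
    (ε : ℝ) (hε : 0 < ε)
    (f₁ : G → ℝ) (hf₁0 : ∀ x, 0 ≤ f₁ x) (hf₁1 : ∑ x, f₁ x = 1)
    (f₂ : G → ℝ) (hf₂0 : ∀ x, 0 ≤ f₂ x) (hf₂1 : ∑ x, f₂ x = 1)
    (hf₂π : ∀ x : G, x ∉ π → f₂ x = 0)
    (hf₂ : EquidistOn π f₂ ε) :
    ∀ g : G, convLaw f₁ f₂ g ≤ (1 + ε) * cosetMass f₁ g π / (Nat.card π : ℝ) := by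
  classical
  letI : Fintype π := Fintype.ofFinite _
  intro g
  set n : ℝ := (Nat.card π : ℝ) with hn_def
  have hn : (0:ℝ) < n := by
    rw [hn_def]
    exact_mod_cast Nat.card_pos (α := ↥π)
  have hcard : (Fintype.card ↥π : ℝ) = n := by
    rw [hn_def, Nat.card_eq_fintype_card]
  -- the total mass of f₂ on π is 1
  have hsumπ : ∑ a : π, f₂ (a : G) = 1 := by
    rw [← hf₂1]
    rw [← Finset.sum_subtype (Finset.univ.filter (fun x => x ∈ π))
      (fun x => by simp) (fun x => f₂ x)]
    exact Finset.sum_subset (Finset.filter_subset _ _)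
      (fun x _ hx => hf₂π x
        (fun h => hx (Finset.mem_filter.mpr ⟨Finset.mem_univ x, h⟩)))
  -- trivial coefficient is 1
  have hcoeff1 : subgroupFourierCoeff π f₂ 1 = 1 := by
    simp only [subgroupFourierCoeff]
    push_cast [AddChar.one_apply, mul_one]
    exact_mod_cast hsumπ
  -- key pointwise bound on f₂
  have key : ∀ y : π, f₂ (y : G) ≤ (1 + ε) / n := by
    intro y
    have hinv : (Fintype.card ↥π : ℂ) * (f₂ (y : G) : ℂ) =
        ∑ χ : AddChar π ℂ, χ (-y) * subgroupFourierCoeff π f₂ χ := by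
      simp only [subgroupFourierCoeff, Finset.mul_sum]
      rw [Finset.sum_comm]
      have : ∀ a : π, ∑ χ : AddChar π ℂ, χ (-y) * ((f₂ (a:G) : ℂ) * χ a)
          = (f₂ (a:G) : ℂ) * ∑ χ : AddChar π ℂ, χ (a - y) := by
        intro a
        rw [Finset.mul_sum]
        refine Finset.sum_congr rfl fun χ _ => ?_
        rw [sub_eq_add_neg, AddChar.map_add_eq_mul]
        ring
      rw [Finset.sum_congr rfl (fun a _ => this a)]
      have h2 : ∀ a : π, (f₂ (a:G) : ℂ) * ∑ χ : AddChar π ℂ, χ (a - y)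
          = if a = y then (f₂ (a:G) : ℂ) * (Fintype.card ↥π : ℂ) else 0 := by
        intro a
        by_cases hay : a = y
        · subst hay; simp [AddChar.sum_apply_eq_ite]
        · rw [AddChar.sum_apply_eq_ite, if_neg (by simpa [sub_eq_zero] using hay),
            if_neg hay, mul_zero]
      rw [Finset.sum_congr rfl (fun a _ => h2 a),
        Finset.sum_ite_eq' Finset.univ y (fun a => (f₂ (a:G) : ℂ) * (Fintype.card ↥π : ℂ))]
      simp [mul_comm]
    have habs : n * f₂ (y : G) ≤ 1 + ε := by
      have h0 : n * f₂ (y : G) =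
          ‖(Fintype.card ↥π : ℂ) * (f₂ (y : G) : ℂ)‖ := by
        rw [norm_mul, Complex.norm_natCast, Complex.norm_real, Real.norm_eq_abs,
          abs_of_nonneg (hf₂0 _), hcard]
      rw [h0, hinv]
      calc ‖∑ χ : AddChar π ℂ, χ (-y) * subgroupFourierCoeff π f₂ χ‖
          ≤ ∑ χ : AddChar π ℂ, ‖χ (-y) * subgroupFourierCoeff π f₂ χ‖ :=
            norm_sum_le _ _
        _ = ∑ χ : AddChar π ℂ, ‖subgroupFourierCoeff π f₂ χ‖ := by
            refine Finset.sum_congr rfl fun χ _ => ?_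
            rw [norm_mul]
            have : ‖χ (-y)‖ = 1 := χ.norm_apply _
            rw [this, one_mul]
        _ ≤ 1 + ε := by
            rw [← Finset.add_sum_erase _ _ (Finset.mem_univ (1 : AddChar π ℂ))]
            have h1 : ‖subgroupFourierCoeff π f₂ 1‖ = 1 := by
              rw [hcoeff1]; simp
            rw [h1]
            gcongr 1 + ?_
            calc ∑ χ ∈ Finset.univ.erase (1 : AddChar π ℂ),
                  ‖subgroupFourierCoeff π f₂ χ‖
                ≤ ∑ _χ ∈ Finset.univ.erase (1 : AddChar π ℂ), ε / n := by
                  refine Finset.sum_le_sum fun χ hχ => ?_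
                  exact hf₂ χ (Finset.ne_of_mem_erase hχ)
              _ = ((Finset.univ.erase (1 : AddChar π ℂ)).card : ℝ) * (ε / n) := by
                  rw [Finset.sum_const, nsmul_eq_mul]
              _ ≤ n * (ε / n) := by
                  refine mul_le_mul_of_nonneg_right ?_ (by positivity)
                  have : (Finset.univ.erase (1 : AddChar π ℂ)).card ≤
                      Fintype.card (AddChar π ℂ) := Finset.card_le_card (Finset.subset_univ _)
                  have hc : (Fintype.card (AddChar π ℂ) : ℝ) = n := by
                    rw [AddChar.card_eq, hcard]
                  calc ((Finset.univ.erase (1 : AddChar π ℂ)).card : ℝ)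
                      ≤ (Fintype.card (AddChar π ℂ) : ℝ) := by exact_mod_cast this
                    _ = n := hc
              _ = ε := by field_simp
    calc f₂ (y : G) = (n * f₂ (y : G)) / n := by field_simp
      _ ≤ (1 + ε) / n := by gcongr
  -- main computation
  have hconv : convLaw f₁ f₂ g =
      ∑ a ∈ Finset.univ.filter (fun a => -g + a ∈ π), f₁ a * f₂ (g - a) := by
    simp only [convLaw]
    refine (Finset.sum_subset (Finset.filter_subset _ _) fun a _ ha => ?_).symm
    have hmem : -g + a ∉ π := by simpa using ha
    have : g - a ∉ π := fun h => hmem (by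
      have := π.neg_mem h
      simpa [neg_sub, sub_eq_add_neg, add_comm] using this)
    rw [hf₂π _ this, mul_zero]
  rw [hconv]
  calc ∑ a ∈ Finset.univ.filter (fun a => -g + a ∈ π), f₁ a * f₂ (g - a)
      ≤ ∑ a ∈ Finset.univ.filter (fun a => -g + a ∈ π), f₁ a * ((1 + ε) / n) := by
        refine Finset.sum_le_sum fun a ha => ?_
        have hmem : -g + a ∈ π := by simpa using ha
        have hga : g - a ∈ π := by
          have := π.neg_mem hmem
          simpa [neg_add, sub_eq_add_neg, add_comm] using this
        exact mul_le_mul_of_nonneg_left (key ⟨g - a, hga⟩) (hf₁0 a)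
    _ = (1 + ε) * cosetMass f₁ g π / n := by
        rw [← Finset.sum_mul, cosetMass]
        ring

end
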